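/- Let μ ⊆ λ be Young diagrams and n ≥ 1. The skew Schur polynomial s_{λ/μ}(x₁,…,xₙ) := ∑_{T ∈ SSYT(λ/μ, n)} x^T, where SSYT(λ/μ, n) is the set of semistandard Young tableaux of shape λ/μ with entries in {1,…,n}, is a symmetric polynomial in x₁,…,xₙ: it is invariant under every permutation of the variables. -/

import Mathlib

/-- The cells of the skew shape `λ/μ`. -/
def skewCells (μ lam : YoungDiagram) : Finset (ℕ × ℕ) := lam.cells \ μ.cells

/-- The total order on cells induced by a filling `f`: a cell `c = (i,j)` is smaller than
`c' = (i',j')` if `f c < f c'`, or `f c = f c'` and `j < j'`, or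
`f c = f c'`, `j = j'` and `i > i'`. -/
def cellLT (f : ℕ × ℕ → ℕ) (c c' : ℕ × ℕ) : Prop :=
  f c < f c' ∨ (f c = f c' ∧ (c.2 < c'.2 ∨ (c.2 = c'.2 ∧ c'.1 < c.1)))

/-- `f` is a semistandard filling on the cell set `s`: entries are positive,
weakly increasing along rows (left to right) and strictly increasing down columns. -/
def IsSSYTOn (f : ℕ × ℕ → ℕ) (s : Finset (ℕ × ℕ)) : Prop :=
  (∀ c ∈ s, 0 < f c) ∧
  (∀ i j j', j ≤ j' → (i, j) ∈ s → (i, j') ∈ s → f (i, j) ≤ f (i, j')) ∧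
  (∀ i i' j, i < i' → (i, j) ∈ s → (i', j) ∈ s → f (i, j) < f (i', j))

open scoped BigOperators

open Finset

namespace BKproof

variable (s : Finset (ℕ × ℕ)) (g : ℕ × ℕ → ℕ) (k : ℕ)

/-- cell has value k (or k+1) and is vertically paired. -/
def Paired (c : ℕ × ℕ) : Prop :=
  (g c = k ∧ (c.1 + 1, c.2) ∈ s ∧ g (c.1 + 1, c.2) = k + 1) ∨
  (g c = k + 1 ∧ 1 ≤ c.1 ∧ (c.1 - 1, c.2) ∈ s ∧ g (c.1 - 1, c.2) = k)

def Free (c : ℕ × ℕ) : Prop :=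
  c ∈ s ∧ (g c = k ∨ g c = k + 1) ∧ ¬ Paired s g k c

instance : DecidablePred (Paired s g k) := fun c => by unfold Paired; infer_instance
instance : DecidablePred (Free s g k) := fun c => by unfold Free; infer_instance

def F : Finset (ℕ × ℕ) := s.filter (Free s g k)

def rk (c : ℕ × ℕ) : ℕ :=
  ((F s g k).filter (fun d => d.1 = c.1 ∧ d.2 ≤ c.2)).card

def bRow (r : ℕ) : ℕ :=
  ((F s g k).filter (fun d => d.1 = r ∧ g d = k + 1)).card

def aRow (r : ℕ) : ℕ :=
  ((F s g k).filter (fun d => d.1 = r ∧ g d = k)).card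

def bk (c : ℕ × ℕ) : ℕ :=
  if Free s g k c then (if rk s g k c ≤ bRow s g k c.1 then k else k + 1) else g c

variable {s g k}

lemma mem_F {c} : c ∈ F s g k ↔ Free s g k c := by
  classical
  simp only [F, Finset.mem_filter, and_iff_right_iff_imp]
  exact fun h => h.1

lemma Free.mem_s {c} (h : Free s g k c) : c ∈ s := h.1

lemma Free.val {c} (h : Free s g k c) : g c = k ∨ g c = k + 1 := h.2.1

lemma bk_of_not_free {c} (h : ¬ Free s g k c) : bk s g k c = g c := by
  classical
  simp [bk, h]

lemma bk_of_free {c} (h : Free s g k c) :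
    bk s g k c = if rk s g k c ≤ bRow s g k c.1 then k else k + 1 := by
  classical
  simp [bk, h]

lemma bk_val_of_free {c} (h : Free s g k c) :
    bk s g k c = k ∨ bk s g k c = k + 1 := by
  rw [bk_of_free h]; split <;> simp


variable {s : Finset (ℕ × ℕ)} {g : ℕ × ℕ → ℕ} {k : ℕ}

section structural

variable (hP1 : ∀ ⦃r c c'⦄, c' < c → (r+1, c) ∈ s → (r, c') ∈ s → (r+1, c') ∈ s)
variable (hP2 : ∀ ⦃r c c'⦄, c < c' → (r, c) ∈ s → (r+1, c') ∈ s → (r, c') ∈ s)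
variable (hg : IsSSYTOn g s)

include hP1 hg in
/-- paired-k cells are left-closed among k-valued cells of a row -/
lemma K1 {r c c' : ℕ} (hlt : c' < c) (hbelow : (r+1, c) ∈ s) (hval : g (r+1, c) = k + 1)
    (hc' : (r, c') ∈ s) (hv' : g (r, c') = k) :
    (r+1, c') ∈ s ∧ g (r+1, c') = k + 1 := by
  have hmem : (r+1, c') ∈ s := hP1 hlt hbelow hc'
  have h1 : g (r+1, c') ≤ g (r+1, c) := hg.2.1 _ _ _ hlt.le hmem hbelow
  have h2 : g (r, c') < g (r+1, c') := hg.2.2 _ _ _ (Nat.lt_succ_self r) hc' hmem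
  exact ⟨hmem, by omega⟩

include hP2 hg in
/-- paired-(k+1) cells are right-closed among (k+1)-valued cells of a row -/
lemma K2 {r c c' : ℕ} (hlt : c < c') (habove : (r, c) ∈ s) (hval : g (r, c) = k)
    (hc' : (r+1, c') ∈ s) (hv' : g (r+1, c') = k + 1) :
    (r, c') ∈ s ∧ g (r, c') = k := by
  have hmem : (r, c') ∈ s := hP2 hlt habove hc'
  have h1 : g (r, c) ≤ g (r, c') := hg.2.1 _ _ _ hlt.le habove hmem
  have h2 : g (r, c') < g (r+1, c') := hg.2.2 _ _ _ (Nat.lt_succ_self r) hmem hc'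
  exact ⟨hmem, by omega⟩

include hP1 hP2 hg in
lemma L1 {r j j' : ℕ} (hmem : (r, j) ∈ s) (hnf : ¬ Free s g k (r, j))
    (hf : Free s g k (r, j')) (hlt : j < j') : g (r, j) ≤ k := by
  have hmem' : (r, j') ∈ s := hf.1
  have hle : g (r, j) ≤ g (r, j') := hg.2.1 _ _ _ hlt.le hmem hmem'
  rcases hf.2.1 with hv' | hv'
  · omega
  · -- g (r,j') = k+1 and free; if g (r,j) = k+1 it would be paired, pushing pairing right
    by_contra hcon
    have hv : g (r, j) = k + 1 := by
      have := hf.2.1; omega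
    -- (r,j) has value k+1 and is not free, so it is paired: above cell has value k
    have hpair : Paired s g k (r, j) := by
      by_contra hp
      exact hnf ⟨hmem, Or.inr hv, hp⟩
    rcases hpair with ⟨h1, _⟩ | ⟨_, hr1, habove, hva⟩
    · omega
    · -- above cell (r-1, j) ∈ s with value k ; then (r, j') also paired
      obtain ⟨r0, rfl⟩ : ∃ r0, r = r0 + 1 := ⟨r - 1, by omega⟩
      simp only [Nat.add_sub_cancel] at habove hva
      have := K2 hP2 hg hlt habove hva hmem' hv'
      exact hf.2.2 (Or.inr ⟨hv', by omega, by simpa using this⟩)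

include hP1 hP2 hg in
lemma L2 {r j j' : ℕ} (hmem : (r, j) ∈ s) (hnf : ¬ Free s g k (r, j))
    (hf : Free s g k (r, j')) (hlt : j' < j) : k + 1 ≤ g (r, j) := by
  have hmem' : (r, j') ∈ s := hf.1
  have hle : g (r, j') ≤ g (r, j) := hg.2.1 _ _ _ hlt.le hmem' hmem
  rcases hf.2.1 with hv' | hv'
  · by_contra hcon
    have hv : g (r, j) = k := by omega
    have hpair : Paired s g k (r, j) := by
      by_contra hp
      exact hnf ⟨hmem, Or.inl hv, hp⟩
    rcases hpair with ⟨_, hbelow, hvb⟩ | ⟨h1, _⟩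
    · have := K1 hP1 hg hlt hbelow hvb hmem' hv'
      exact hf.2.2 (Or.inl ⟨hv', this.1, this.2⟩)
    · omega
  · omega

include hg in
/-- within a row, k-valued cells come before (k+1)-valued cells -/
lemma AbeforeB {r j j' : ℕ} (hj : (r, j) ∈ s) (hj' : (r, j') ∈ s)
    (hv : g (r, j) = k) (hv' : g (r, j') = k + 1) : j < j' := by
  by_contra h
  have := hg.2.1 r j' j (by omega) hj' hj
  omega

end structural

section rank

variable (s : Finset (ℕ × ℕ)) (g : ℕ × ℕ → ℕ) (k : ℕ)

def Frow (r : ℕ) : Finset (ℕ × ℕ) := (F s g k).filter (fun d => d.1 = r)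

variable {s g k}

lemma mem_Frow {r : ℕ} {c : ℕ × ℕ} : c ∈ Frow s g k r ↔ c ∈ F s g k ∧ c.1 = r := by
  simp [Frow]

lemma rk_eq (c : ℕ × ℕ) :
    rk s g k c = ((Frow s g k c.1).filter (fun d => d.2 ≤ c.2)).card := by
  unfold rk Frow
  rw [Finset.filter_filter]

lemma rk_lt_rk {c c' : ℕ × ℕ} (hc : c ∈ F s g k) (hc' : c' ∈ F s g k)
    (hrow : c.1 = c'.1) (hlt : c.2 < c'.2) : rk s g k c < rk s g k c' := by
  apply Finset.card_lt_card
  constructor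
  · intro d hd
    simp only [Finset.mem_filter] at hd ⊢
    exact ⟨hd.1, hd.2.1.trans hrow, by omega⟩
  · intro hsub
    have : c' ∈ (F s g k).filter (fun d => d.1 = c'.1 ∧ d.2 ≤ c'.2) := by
      simp [Finset.mem_filter, hc']
    have h2 := hsub this
    simp only [Finset.mem_filter] at h2
    omega

lemma rk_mono {c c' : ℕ × ℕ} (hrow : c.1 = c'.1) (hle : c.2 ≤ c'.2) :
    rk s g k c ≤ rk s g k c' := by
  apply Finset.card_le_card
  intro d hd
  simp only [Finset.mem_filter] at hd ⊢
  exact ⟨hd.1, hd.2.1.trans hrow, by omega⟩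

lemma one_le_rk {c : ℕ × ℕ} (hc : c ∈ F s g k) : 1 ≤ rk s g k c := by
  rw [Nat.one_le_iff_ne_zero, ← Nat.pos_iff_ne_zero, rk, Finset.card_pos]
  exact ⟨c, by simp [Finset.mem_filter, hc]⟩

lemma rk_le_card {c : ℕ × ℕ} : rk s g k c ≤ (Frow s g k c.1).card := by
  rw [rk_eq]
  exact Finset.card_filter_le _ _

lemma rk_injOn {r : ℕ} : Set.InjOn (rk s g k) (Frow s g k r) := by
  intro c hc c' hc' h
  simp only [Finset.coe_filter, Set.mem_setOf_eq, Frow, Finset.mem_coe] at hc hc'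
  rcases lt_trichotomy c.2 c'.2 with hlt | heq | hlt
  · exact absurd h (by have := rk_lt_rk hc.1 hc'.1 (hc.2.trans hc'.2.symm) hlt; omega)
  · exact Prod.ext (hc.2.trans hc'.2.symm) heq
  · exact absurd h (by have := rk_lt_rk hc'.1 hc.1 (hc'.2.trans hc.2.symm) hlt; omega)

lemma image_rk {r : ℕ} :
    (Frow s g k r).image (rk s g k) = Finset.Icc 1 (Frow s g k r).card := by
  apply Finset.eq_of_subset_of_card_le
  · intro m hm
    simp only [Finset.mem_image] at hm
    obtain ⟨c, hc, rfl⟩ := hm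
    have h1 : c ∈ F s g k ∧ c.1 = r := mem_Frow.mp hc
    have h2 : rk s g k c ≤ (Frow s g k c.1).card := rk_le_card
    rw [h1.2] at h2
    exact Finset.mem_Icc.mpr ⟨one_le_rk h1.1, h2⟩
  · rw [Nat.card_Icc, Finset.card_image_of_injOn rk_injOn]
    omega

lemma card_rk_le {r m : ℕ} (hm : m ≤ (Frow s g k r).card) :
    ((Frow s g k r).filter (fun c => rk s g k c ≤ m)).card = m := by
  have h1 : ((Frow s g k r).image (rk s g k)).filter (fun t => t ≤ m)
      = ((Frow s g k r).filter (fun c => rk s g k c ≤ m)).image (rk s g k) :=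
    Finset.filter_image
  have h2 : (((Frow s g k r).filter (fun c => rk s g k c ≤ m)).image (rk s g k)).card
      = ((Frow s g k r).filter (fun c => rk s g k c ≤ m)).card :=
    Finset.card_image_of_injOn ((rk_injOn (r := r)).mono (by
      intro x hx
      simp only [Finset.coe_filter, Set.mem_setOf_eq, Finset.mem_coe] at hx ⊢
      exact hx.1))
  rw [← h2, ← h1, image_rk]
  have : (Finset.Icc 1 (Frow s g k r).card).filter (fun t => t ≤ m) = Finset.Icc 1 m := by
    ext t
    simp only [Finset.mem_filter, Finset.mem_Icc]
    omega
  rw [this, Nat.card_Icc]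
  omega

lemma card_rk_gt {r m : ℕ} (hm : m ≤ (Frow s g k r).card) :
    ((Frow s g k r).filter (fun c => ¬ rk s g k c ≤ m)).card = (Frow s g k r).card - m := by
  have := Finset.card_filter_add_card_filter_not
    (s := Frow s g k r) (p := fun c => rk s g k c ≤ m)
  rw [card_rk_le hm] at this
  omega

end rank

section rowcounts

variable {s : Finset (ℕ × ℕ)} {g : ℕ × ℕ → ℕ} {k : ℕ}

lemma bRow_eq (r : ℕ) :
    bRow s g k r = ((Frow s g k r).filter (fun d => g d = k + 1)).card := by
  unfold bRow Frow
  rw [Finset.filter_filter]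

lemma aRow_eq (r : ℕ) :
    aRow s g k r = ((Frow s g k r).filter (fun d => g d = k)).card := by
  unfold aRow Frow
  rw [Finset.filter_filter]

lemma aRow_add_bRow (r : ℕ) : aRow s g k r + bRow s g k r = (Frow s g k r).card := by
  rw [aRow_eq, bRow_eq]
  have h : (Frow s g k r).filter (fun d => g d = k + 1)
      = (Frow s g k r).filter (fun d => ¬ g d = k) := by
    apply Finset.filter_congr
    intro d hd
    have hfree : Free s g k d := mem_F.mp (mem_Frow.mp hd).1
    have := hfree.val
    omega
  rw [h]
  exact Finset.card_filter_add_card_filter_not _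

lemma bRow_le (r : ℕ) : bRow s g k r ≤ (Frow s g k r).card := by
  rw [bRow_eq]; exact Finset.card_filter_le _ _

variable (hg : IsSSYTOn g s)

include hg in
lemma rk_le_aRow {c : ℕ × ℕ} (hc : c ∈ F s g k) (hv : g c = k) :
    rk s g k c ≤ aRow s g k c.1 := by
  rw [aRow_eq]
  rw [rk_eq]
  apply Finset.card_le_card
  intro d hd
  simp only [Finset.mem_filter] at hd ⊢
  refine ⟨hd.1, ?_⟩
  have hdF := (mem_Frow.mp hd.1).1
  have hdrow : d.1 = c.1 := (mem_Frow.mp hd.1).2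
  rcases (mem_F.mp hdF).val with h | h
  · exact h
  · exfalso
    have hds : d ∈ s := (mem_F.mp hdF).mem_s
    have hcs : c ∈ s := (mem_F.mp hc).mem_s
    have : c.2 < d.2 := by
      have := AbeforeB (k := k) (r := c.1) (j := c.2) (j' := d.2) hg
        (by simpa using hcs) (by rw [← hdrow]; simpa using hds) (by simpa using hv)
        (by rw [← hdrow]; simpa using h)
      exact this
    omega

include hg in
lemma aRow_lt_rk {c : ℕ × ℕ} (hc : c ∈ F s g k) (hv : g c = k + 1) :
    aRow s g k c.1 < rk s g k c := by
  rw [aRow_eq, rk_eq]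
  have hsub : insert c ((Frow s g k c.1).filter (fun d => g d = k))
      ⊆ (Frow s g k c.1).filter (fun d => d.2 ≤ c.2) := by
    intro d hd
    rcases Finset.mem_insert.mp hd with rfl | hd
    · exact Finset.mem_filter.mpr ⟨mem_Frow.mpr ⟨hc, rfl⟩, le_refl _⟩
    · rw [Finset.mem_filter] at hd ⊢
      refine ⟨hd.1, ?_⟩
      have hdrow : d.1 = c.1 := (mem_Frow.mp hd.1).2
      have hds : d ∈ s := (mem_F.mp (mem_Frow.mp hd.1).1).mem_s
      have hcs : c ∈ s := (mem_F.mp hc).mem_s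
      have : d.2 < c.2 :=
        AbeforeB (k := k) (r := c.1) (j := d.2) (j' := c.2) hg
          (by rw [← hdrow]; simpa using hds) (by simpa using hcs)
          (by rw [← hdrow]; simpa using hd.2) (by simpa using hv)
      omega
  have hnotmem : c ∉ (Frow s g k c.1).filter (fun d => g d = k) := by
    intro h
    have := (Finset.mem_filter.mp h).2
    omega
  calc ((Frow s g k c.1).filter (fun d => g d = k)).card
      < (insert c ((Frow s g k c.1).filter (fun d => g d = k))).card := by
        rw [Finset.card_insert_of_notMem hnotmem]; omega
    _ ≤ _ := Finset.card_le_card hsub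

end rowcounts

section preserve

variable {s : Finset (ℕ × ℕ)} {g : ℕ × ℕ → ℕ} {k : ℕ}
variable (hP1 : ∀ ⦃r c c'⦄, c' < c → (r+1, c) ∈ s → (r, c') ∈ s → (r+1, c') ∈ s)
variable (hP2 : ∀ ⦃r c c'⦄, c < c' → (r, c) ∈ s → (r+1, c') ∈ s → (r, c') ∈ s)
variable (hP3 : ∀ ⦃i i' i'' j⦄, i ≤ i'' → i'' ≤ i' → (i, j) ∈ s → (i', j) ∈ s → (i'', j) ∈ s)
variable (hg : IsSSYTOn g s)

include hg in
lemma col_adj {i j : ℕ} (hij : (i, j) ∈ s) (hij' : (i+1, j) ∈ s) :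
    bk s g k (i, j) < bk s g k (i+1, j) := by
  have hcol : g (i, j) < g (i+1, j) := hg.2.2 i (i+1) j (by omega) hij hij'
  by_cases h1 : Free s g k (i, j) <;> by_cases h2 : Free s g k (i+1, j)
  · exfalso
    have hv1 := h1.2.1
    have hv2 := h2.2.1
    have hv1' : g (i, j) = k := by omega
    have hv2' : g (i+1, j) = k + 1 := by omega
    exact h1.2.2 (Or.inl ⟨hv1', hij', hv2'⟩)
  · rw [bk_of_not_free h2, bk_of_free h1]
    have hv1 := h1.2.1
    have hne : g (i+1, j) ≠ k + 1 := by
      intro hcontra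
      have hv1' : g (i, j) = k := by omega
      exact h1.2.2 (Or.inl ⟨hv1', hij', hcontra⟩)
    split_ifs <;> omega
  · rw [bk_of_not_free h1, bk_of_free h2]
    have hv2 := h2.2.1
    have hne : g (i, j) ≠ k := by
      intro hcontra
      have hv2' : g (i+1, j) = k + 1 := by omega
      exact h2.2.2 (Or.inr ⟨hv2', by omega, by simpa using hij, by simpa using hcontra⟩)
    split_ifs <;> omega
  · rw [bk_of_not_free h1, bk_of_not_free h2]
    exact hcol

include hP3 hg in
lemma col_chain {j : ℕ} : ∀ d : ℕ, ∀ i : ℕ, (i, j) ∈ s → (i + d + 1, j) ∈ s →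
    bk s g k (i, j) < bk s g k (i + d + 1, j) := by
  intro d
  induction d with
  | zero => exact fun i h h' => col_adj hg h h'
  | succ d ih =>
    intro i h h'
    have hmid : (i + 1, j) ∈ s := hP3 (by omega) (by omega) h h'
    have h1 := col_adj (k := k) hg h hmid
    have h2 := ih (i + 1) hmid (by rw [show i + 1 + d + 1 = i + (d+1) + 1 by omega]; exact h')
    rw [show i + 1 + d + 1 = i + (d+1) + 1 by omega] at h2
    omega

include hP1 hP2 hP3 hg in
lemma bk_isSSYT (hk : 1 ≤ k) : IsSSYTOn (bk s g k) s := by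
  refine ⟨?_, ?_, ?_⟩
  · intro c hc
    by_cases hf : Free s g k c
    · rw [bk_of_free hf]; split_ifs <;> omega
    · rw [bk_of_not_free hf]; exact hg.1 c hc
  · intro i j j' hle hm hm'
    rcases Nat.eq_or_lt_of_le hle with rfl | hlt
    · exact le_refl _
    by_cases h1 : Free s g k (i, j) <;> by_cases h2 : Free s g k (i, j')
    · rw [bk_of_free h1, bk_of_free h2]
      have hrk : rk s g k (i, j) ≤ rk s g k (i, j') := rk_mono rfl (by simpa using hle)
      simp only
      split_ifs <;> omega
    · have hL2 : k + 1 ≤ g (i, j') := L2 hP1 hP2 hg hm' h2 h1 hlt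
      rw [bk_of_free h1, bk_of_not_free h2]
      split_ifs <;> omega
    · have hL1 : g (i, j) ≤ k := L1 hP1 hP2 hg hm h1 h2 hlt
      rw [bk_of_not_free h1, bk_of_free h2]
      split_ifs <;> omega
    · rw [bk_of_not_free h1, bk_of_not_free h2]
      exact hg.2.1 i j j' hle hm hm'
  · intro i i' j hlt hm hm'
    obtain ⟨d, rfl⟩ : ∃ d, i' = i + d + 1 := ⟨i' - i - 1, by omega⟩
    exact col_chain hP3 hg d i hm hm'

include hg in
lemma free_bk_of_free {c : ℕ × ℕ} (h : Free s g k c) : Free s (bk s g k) k c := by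
  refine ⟨h.1, bk_val_of_free h, ?_⟩
  have hval := h.2.1
  rintro (⟨hv, hbelow, hvb⟩ | ⟨hv, hpos, habove, hva⟩)
  · -- bk c = k, below in s with bk = k+1
    have hcol : g c < g (c.1 + 1, c.2) := by
      have := hg.2.2 c.1 (c.1+1) c.2 (by omega) (by simpa using h.1) hbelow
      simpa using this
    have hvb' : g (c.1 + 1, c.2) = k + 1 := by
      by_cases hbf : Free s g k (c.1 + 1, c.2)
      · have := hbf.2.1; omega
      · rw [bk_of_not_free hbf] at hvb; exact hvb
    have hvc : g c = k := by omega
    exact h.2.2 (Or.inl ⟨hvc, hbelow, hvb'⟩)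
  · -- bk c = k+1, above in s with bk = k
    obtain ⟨i0, hi0⟩ : ∃ i0, c.1 = i0 + 1 := ⟨c.1 - 1, by omega⟩
    have habove' : (i0, c.2) ∈ s := by rw [hi0] at habove; simpa using habove
    have hcol : g (i0, c.2) < g c := by
      have := hg.2.2 i0 (i0+1) c.2 (by omega) habove' (by rw [← hi0]; simpa using h.1)
      rw [← hi0] at this
      simpa using this
    have hva' : g (i0, c.2) = k := by
      by_cases hbf : Free s g k (i0, c.2)
      · have := hbf.2.1; omega
      · rw [hi0] at hva
        simp only [Nat.add_sub_cancel] at hva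
        rw [bk_of_not_free hbf] at hva; exact hva
    have hvc : g c = k + 1 := by omega
    exact h.2.2 (Or.inr ⟨hvc, by omega, by rw [hi0]; simpa using habove',
      by rw [hi0]; simpa using hva'⟩)

include hg in
lemma not_free_bk_of_not_free {c : ℕ × ℕ} (hcs : c ∈ s) (h : ¬ Free s g k c) :
    ¬ Free s (bk s g k) k c := by
  intro hf
  rcases hf.2.1 with hval | hval <;> rw [bk_of_not_free h] at hval
  · -- g c = k ; c paired below
    have hpair : Paired s g k c := by
      by_contra hp
      exact h ⟨hcs, Or.inl hval, hp⟩
    rcases hpair with ⟨_, hbelow, hvb⟩ | ⟨hv, _⟩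
    · -- below has value k+1 and is paired with c above it
      have hbelow_paired : Paired s g k (c.1+1, c.2) := by
        exact Or.inr ⟨hvb, by omega, by simpa using hcs, by simpa using hval⟩
      have hbnf : ¬ Free s g k (c.1+1, c.2) := fun hfb => hfb.2.2 hbelow_paired
      apply hf.2.2
      exact Or.inl ⟨by rw [bk_of_not_free h]; exact hval, hbelow,
        by rw [bk_of_not_free hbnf]; exact hvb⟩
    · omega
  · -- g c = k+1 ; c paired above
    have hpair : Paired s g k c := by
      by_contra hp
      exact h ⟨hcs, Or.inr hval, hp⟩
    rcases hpair with ⟨hv, _⟩ | ⟨_, hpos, habove, hva⟩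
    · omega
    · obtain ⟨i0, hi0⟩ : ∃ i0, c.1 = i0 + 1 := ⟨c.1 - 1, by omega⟩
      have habove' : (i0, c.2) ∈ s := by rw [hi0] at habove; simpa using habove
      have hva' : g (i0, c.2) = k := by rw [hi0] at hva; simpa using hva
      have habove_paired : Paired s g k (i0, c.2) := by
        exact Or.inl ⟨hva', by rw [← hi0]; simpa using hcs, by rw [← hi0]; simpa using hval⟩
      have hanf : ¬ Free s g k (i0, c.2) := fun hfa => hfa.2.2 habove_paired
      apply hf.2.2
      refine Or.inr ⟨by rw [bk_of_not_free h]; exact hval, by omega, ?_, ?_⟩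
      · rw [hi0]; simp only [Nat.add_sub_cancel]; exact habove'
      · rw [hi0]; simp only [Nat.add_sub_cancel]; rw [bk_of_not_free hanf]; exact hva'

include hg in
lemma F_bk : F s (bk s g k) k = F s g k := by
  ext c
  rw [mem_F, mem_F]
  constructor
  · intro hf
    by_contra h
    exact not_free_bk_of_not_free hg hf.1 h hf
  · exact free_bk_of_free hg

include hg in
lemma rk_bk (c : ℕ × ℕ) : rk s (bk s g k) k c = rk s g k c := by
  unfold rk
  rw [F_bk hg]

include hg in
lemma bRow_bk (r : ℕ) : bRow s (bk s g k) k r = aRow s g k r := by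
  unfold bRow
  rw [F_bk hg]
  have hcongr : (F s g k).filter (fun d => d.1 = r ∧ bk s g k d = k + 1)
      = (F s g k).filter (fun d => d.1 = r ∧ ¬ rk s g k d ≤ bRow s g k r) := by
    apply Finset.filter_congr
    intro d hd
    have hfree : Free s g k d := mem_F.mp hd
    rw [bk_of_free hfree]
    constructor
    · rintro ⟨hr, hv⟩
      refine ⟨hr, ?_⟩
      rw [hr] at hv
      split_ifs at hv <;> omega
    · rintro ⟨hr, hv⟩
      exact ⟨hr, by rw [hr, if_neg hv]⟩
  rw [hcongr, ← Finset.filter_filter]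
  have : (F s g k).filter (fun d => d.1 = r) = Frow s g k r := rfl
  rw [this, card_rk_gt (bRow_le r)]
  have := aRow_add_bRow (s := s) (g := g) (k := k) r
  omega

include hg in
lemma bk_bk : bk s (bk s g k) k = g := by
  funext c
  by_cases hf : Free s g k c
  · have hf' : Free s (bk s g k) k c := free_bk_of_free hg hf
    rw [bk_of_free hf', rk_bk hg, bRow_bk hg]
    rcases hf.2.1 with hv | hv
    · rw [if_pos (rk_le_aRow hg (mem_F.mpr hf) hv), hv]
    · rw [if_neg (by have := aRow_lt_rk hg (mem_F.mpr hf) hv; omega), hv]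
  · by_cases hcs : c ∈ s
    · rw [bk_of_not_free (not_free_bk_of_not_free hg hcs hf), bk_of_not_free hf]
    · rw [bk_of_not_free (fun h => hcs h.1), bk_of_not_free hf]

end preserve

section counting

variable {s : Finset (ℕ × ℕ)} {g : ℕ × ℕ → ℕ} {k : ℕ}

lemma paired_below {c : ℕ × ℕ} (hcs : c ∈ s) (hnf : ¬ Free s g k c) (hv : g c = k) :
    (c.1+1, c.2) ∈ s ∧ g (c.1+1, c.2) = k + 1 := by
  have hpair : Paired s g k c := by
    by_contra hp
    exact hnf ⟨hcs, Or.inl hv, hp⟩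
  rcases hpair with ⟨_, h1, h2⟩ | ⟨h1, _⟩
  · exact ⟨h1, h2⟩
  · omega

lemma paired_above {c : ℕ × ℕ} (hcs : c ∈ s) (hnf : ¬ Free s g k c) (hv : g c = k + 1) :
    1 ≤ c.1 ∧ (c.1-1, c.2) ∈ s ∧ g (c.1-1, c.2) = k := by
  have hpair : Paired s g k c := by
    by_contra hp
    exact hnf ⟨hcs, Or.inr hv, hp⟩
  rcases hpair with ⟨h1, _⟩ | ⟨_, h1, h2, h3⟩
  · omega
  · exact ⟨h1, h2, h3⟩

/-- vertically paired k-cells are in bijection with vertically paired (k+1)-cells -/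
lemma card_paired_eq :
    (s.filter (fun c => g c = k ∧ ¬ Free s g k c)).card
      = (s.filter (fun c => g c = k + 1 ∧ ¬ Free s g k c)).card := by
  refine Finset.card_bij' (fun c _ => (c.1 + 1, c.2)) (fun d _ => (d.1 - 1, d.2))
    ?_ ?_ ?_ ?_
  · intro c hc
    rw [Finset.mem_filter] at hc ⊢
    obtain ⟨hcs, hv, hnf⟩ := hc
    obtain ⟨hbs, hvb⟩ := paired_below hcs hnf hv
    refine ⟨hbs, hvb, fun hfree => hfree.2.2 ?_⟩
    refine Or.inr ⟨hvb, by simp, ?_, ?_⟩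
    · simpa using hcs
    · simpa using hv
  · intro d hd
    rw [Finset.mem_filter] at hd ⊢
    obtain ⟨hds, hv, hnf⟩ := hd
    obtain ⟨hpos, has, hva⟩ := paired_above hds hnf hv
    refine ⟨has, hva, fun hfree => hfree.2.2 ?_⟩
    have hrw : d.1 - 1 + 1 = d.1 := by omega
    refine Or.inl ⟨hva, ?_, ?_⟩
    · rw [hrw]; simpa using hds
    · rw [hrw]; simpa using hv
  · intro c hc
    simp
  · intro d hd
    rw [Finset.mem_filter] at hd
    obtain ⟨hds, hv, hnf⟩ := hd
    obtain ⟨hpos, _, _⟩ := paired_above hds hnf hv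
    exact Prod.ext (show d.1 - 1 + 1 = d.1 by omega) rfl

end counting

section counting2

variable {s : Finset (ℕ × ℕ)} {g : ℕ × ℕ → ℕ} {k : ℕ}

lemma fiber_eq (P : ℕ × ℕ → Prop) [DecidablePred P] (r : ℕ) :
    ((F s g k).filter P).filter (fun c => c.1 = r) = (Frow s g k r).filter P := by
  rw [Finset.filter_comm]
  rfl

lemma card_free_k :
    ((F s g k).filter (fun c => rk s g k c ≤ bRow s g k c.1)).card
      = ((F s g k).filter (fun c => g c = k + 1)).card := by
  have hmaps : ∀ (P : ℕ × ℕ → Prop) (inst : DecidablePred P),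
      ∀ x ∈ (F s g k).filter P, x.1 ∈ (F s g k).image Prod.fst := by
    intro P _ x hx
    exact Finset.mem_image_of_mem _ (Finset.mem_filter.mp hx).1
  rw [Finset.card_eq_sum_card_fiberwise (hmaps _ _), Finset.card_eq_sum_card_fiberwise (hmaps _ _)]
  apply Finset.sum_congr rfl
  intro r _
  have e1 : ((F s g k).filter (fun c => rk s g k c ≤ bRow s g k c.1)).filter (fun c => c.1 = r)
      = (Frow s g k r).filter (fun c => rk s g k c ≤ bRow s g k r) := by
    rw [fiber_eq]
    apply Finset.filter_congr
    intro c hc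
    rw [(mem_Frow.mp hc).2]
  rw [e1, fiber_eq, card_rk_le (bRow_le r), ← bRow_eq]

lemma card_free_k1 :
    ((F s g k).filter (fun c => ¬ rk s g k c ≤ bRow s g k c.1)).card
      = ((F s g k).filter (fun c => g c = k)).card := by
  have hmaps : ∀ (P : ℕ × ℕ → Prop) (inst : DecidablePred P),
      ∀ x ∈ (F s g k).filter P, x.1 ∈ (F s g k).image Prod.fst := by
    intro P _ x hx
    exact Finset.mem_image_of_mem _ (Finset.mem_filter.mp hx).1
  rw [Finset.card_eq_sum_card_fiberwise (hmaps _ _), Finset.card_eq_sum_card_fiberwise (hmaps _ _)]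
  apply Finset.sum_congr rfl
  intro r _
  have e1 : ((F s g k).filter (fun c => ¬ rk s g k c ≤ bRow s g k c.1)).filter (fun c => c.1 = r)
      = (Frow s g k r).filter (fun c => ¬ rk s g k c ≤ bRow s g k r) := by
    rw [fiber_eq]
    apply Finset.filter_congr
    intro c hc
    rw [(mem_Frow.mp hc).2]
  rw [e1, fiber_eq, card_rk_gt (bRow_le r), ← aRow_eq]
  have := aRow_add_bRow (s := s) (g := g) (k := k) r
  omega

lemma filter_free_bk_k :
    (s.filter (fun c => bk s g k c = k)).filter (Free s g k)
      = (F s g k).filter (fun c => rk s g k c ≤ bRow s g k c.1) := by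
  ext c
  simp only [Finset.mem_filter, mem_F]
  constructor
  · rintro ⟨⟨hcs, hbk⟩, hfree⟩
    rw [bk_of_free hfree] at hbk
    refine ⟨hfree, ?_⟩
    by_contra h
    rw [if_neg h] at hbk
    omega
  · rintro ⟨hfree, hrk⟩
    exact ⟨⟨hfree.1, by rw [bk_of_free hfree, if_pos hrk]⟩, hfree⟩

lemma filter_free_bk_k1 :
    (s.filter (fun c => bk s g k c = k + 1)).filter (Free s g k)
      = (F s g k).filter (fun c => ¬ rk s g k c ≤ bRow s g k c.1) := by
  ext c
  simp only [Finset.mem_filter, mem_F]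
  constructor
  · rintro ⟨⟨hcs, hbk⟩, hfree⟩
    rw [bk_of_free hfree] at hbk
    refine ⟨hfree, ?_⟩
    intro h
    rw [if_pos h] at hbk
    omega
  · rintro ⟨hfree, hrk⟩
    exact ⟨⟨hfree.1, by rw [bk_of_free hfree, if_neg hrk]⟩, hfree⟩

lemma filter_free_val (m : ℕ) :
    (s.filter (fun c => g c = m)).filter (Free s g k)
      = (F s g k).filter (fun c => g c = m) := by
  rw [Finset.filter_comm]
  rfl

lemma filter_nfree_bk (m : ℕ) :
    (s.filter (fun c => bk s g k c = m)).filter (fun c => ¬ Free s g k c)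
      = s.filter (fun c => g c = m ∧ ¬ Free s g k c) := by
  ext c
  simp only [Finset.mem_filter]
  constructor
  · rintro ⟨⟨hcs, hbk⟩, hnf⟩
    rw [bk_of_not_free hnf] at hbk
    exact ⟨hcs, hbk, hnf⟩
  · rintro ⟨hcs, hv, hnf⟩
    exact ⟨⟨hcs, by rw [bk_of_not_free hnf]; exact hv⟩, hnf⟩

lemma filter_nfree_val (m : ℕ) :
    (s.filter (fun c => g c = m)).filter (fun c => ¬ Free s g k c)
      = s.filter (fun c => g c = m ∧ ¬ Free s g k c) := by
  rw [Finset.filter_filter]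

lemma count_k :
    (s.filter (fun c => bk s g k c = k)).card = (s.filter (fun c => g c = k + 1)).card := by
  rw [← Finset.card_filter_add_card_filter_not
      (s := s.filter (fun c => bk s g k c = k)) (p := Free s g k),
    ← Finset.card_filter_add_card_filter_not
      (s := s.filter (fun c => g c = k + 1)) (p := Free s g k)]
  rw [filter_free_bk_k, filter_free_val, filter_nfree_bk, filter_nfree_val,
    card_free_k, card_paired_eq]

lemma count_k1 :
    (s.filter (fun c => bk s g k c = k + 1)).card = (s.filter (fun c => g c = k)).card := by
  rw [← Finset.card_filter_add_card_filter_not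
      (s := s.filter (fun c => bk s g k c = k + 1)) (p := Free s g k),
    ← Finset.card_filter_add_card_filter_not
      (s := s.filter (fun c => g c = k)) (p := Free s g k)]
  rw [filter_free_bk_k1, filter_free_val, filter_nfree_bk, filter_nfree_val,
    card_free_k1, ← card_paired_eq]

end counting2

section products

open MvPolynomial

variable {s : Finset (ℕ × ℕ)} {k : ℕ}

lemma prod_X_split (w : ℕ × ℕ → ℕ) :
    ∏ c ∈ s, (X (w c) : MvPolynomial ℕ ℤ)
      = X k ^ (s.filter (fun c => w c = k)).card
        * X (k+1) ^ (s.filter (fun c => w c = k+1)).card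
        * ∏ c ∈ s.filter (fun c => ¬ w c = k ∧ ¬ w c = k + 1), X (w c) := by
  rw [← Finset.prod_filter_mul_prod_filter_not s (fun c => w c = k)]
  rw [← Finset.prod_filter_mul_prod_filter_not (s.filter (fun c => ¬ w c = k))
    (fun c => w c = k + 1)]
  have e1 : ∏ c ∈ s.filter (fun c => w c = k), (X (w c) : MvPolynomial ℕ ℤ)
      = X k ^ (s.filter (fun c => w c = k)).card := by
    rw [← Finset.prod_const]
    apply Finset.prod_congr rfl
    intro c hc
    rw [(Finset.mem_filter.mp hc).2]
  have e2 : (s.filter (fun c => ¬ w c = k)).filter (fun c => w c = k + 1)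
      = s.filter (fun c => w c = k + 1) := by
    rw [Finset.filter_filter]
    apply Finset.filter_congr
    intro c _
    constructor
    · exact fun h => h.2
    · exact fun h => ⟨by omega, h⟩
  have e3 : ∏ c ∈ (s.filter (fun c => ¬ w c = k)).filter (fun c => w c = k + 1),
        (X (w c) : MvPolynomial ℕ ℤ)
      = X (k+1) ^ (s.filter (fun c => w c = k + 1)).card := by
    rw [e2, ← Finset.prod_const]
    apply Finset.prod_congr rfl
    intro c hc
    rw [(Finset.mem_filter.mp hc).2]
  have e4 : (s.filter (fun c => ¬ w c = k)).filter (fun c => ¬ w c = k + 1)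
      = s.filter (fun c => ¬ w c = k ∧ ¬ w c = k + 1) := Finset.filter_filter _ _ _
  rw [e1, e3, e4, mul_assoc]

lemma prod_X_eq_of_counts {u v : ℕ × ℕ → ℕ}
    (h1 : ∀ c ∈ s, u c ≠ k → u c ≠ k + 1 → u c = v c)
    (h2 : ∀ c ∈ s, v c ≠ k → v c ≠ k + 1 → u c = v c)
    (h3 : (s.filter (fun c => u c = k)).card = (s.filter (fun c => v c = k)).card)
    (h4 : (s.filter (fun c => u c = k + 1)).card = (s.filter (fun c => v c = k + 1)).card) :
    ∏ c ∈ s, (X (u c) : MvPolynomial ℕ ℤ) = ∏ c ∈ s, X (v c) := by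
  rw [prod_X_split (k := k) u, prod_X_split (k := k) v, h3, h4]
  congr 1
  have hsets : s.filter (fun c => ¬ u c = k ∧ ¬ u c = k + 1)
      = s.filter (fun c => ¬ v c = k ∧ ¬ v c = k + 1) := by
    apply Finset.filter_congr
    intro c hc
    constructor
    · rintro ⟨ha, hb⟩
      have := h1 c hc ha hb
      omega
    · rintro ⟨ha, hb⟩
      have := h2 c hc ha hb
      omega
  rw [hsets]
  apply Finset.prod_congr rfl
  intro c hc
  rw [Finset.mem_filter] at hc
  rw [h2 c hc.1 hc.2.1 hc.2.2]

variable {g : ℕ × ℕ → ℕ}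

lemma swap_filter_k :
    s.filter (fun c => Equiv.swap k (k+1) (g c) = k) = s.filter (fun c => g c = k + 1) := by
  apply Finset.filter_congr
  intro c _
  constructor
  · intro h
    by_contra hne
    by_cases h2 : g c = k
    · rw [h2, Equiv.swap_apply_left] at h; omega
    · rw [Equiv.swap_apply_of_ne_of_ne h2 hne] at h; exact h2 h
  · intro h
    rw [h, Equiv.swap_apply_right]

lemma swap_filter_k1 :
    s.filter (fun c => Equiv.swap k (k+1) (g c) = k + 1) = s.filter (fun c => g c = k) := by
  apply Finset.filter_congr
  intro c _
  constructor
  · intro h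
    by_contra hne
    by_cases h2 : g c = k + 1
    · rw [h2, Equiv.swap_apply_right] at h; omega
    · rw [Equiv.swap_apply_of_ne_of_ne hne h2] at h; exact h2 h
  · intro h
    rw [h, Equiv.swap_apply_left]

lemma prod_bk_eq_prod_swap :
    ∏ c ∈ s, (X (bk s g k c) : MvPolynomial ℕ ℤ)
      = ∏ c ∈ s, X (Equiv.swap k (k+1) (g c)) := by
  apply prod_X_eq_of_counts (k := k)
  · intro c hc ha hb
    have hnf : ¬ Free s g k c := by
      intro hf
      rcases bk_val_of_free hf with h | h <;> omega
    rw [bk_of_not_free hnf]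
    have hva : g c ≠ k := by rw [bk_of_not_free hnf] at ha; exact ha
    have hvb : g c ≠ k + 1 := by rw [bk_of_not_free hnf] at hb; exact hb
    rw [Equiv.swap_apply_of_ne_of_ne hva hvb]
  · intro c hc ha hb
    have hva : g c ≠ k+1 := fun h => ha (by rw [h, Equiv.swap_apply_right])
    have hvb : g c ≠ k := fun h => hb (by rw [h, Equiv.swap_apply_left])
    have hnf : ¬ Free s g k c := by
      intro hf
      rcases hf.2.1 with h | h <;> omega
    rw [bk_of_not_free hnf, Equiv.swap_apply_of_ne_of_ne hvb hva]
  · rw [swap_filter_k, count_k]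
  · rw [swap_filter_k1, count_k1]

end products

section groupgen

def gens (n : ℕ) : Set (Equiv.Perm ℕ) :=
  {τ | ∃ j, 1 ≤ j ∧ j + 1 ≤ n ∧ τ = Equiv.swap j (j+1)}

lemma swap_mem_closure {n : ℕ} : ∀ b a : ℕ, 1 ≤ a → a ≤ b → b ≤ n →
    Equiv.swap a b ∈ Subgroup.closure (gens n) := by
  intro b
  induction b with
  | zero => intro a h1 h2 _; omega
  | succ b ih =>
    intro a h1 h2 hn
    rcases Nat.lt_or_ge a (b+1) with hlt | hge
    · have hb1 : 1 ≤ b := by omega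
      have hgen : Equiv.swap b (b+1) ∈ Subgroup.closure (gens n) :=
        Subgroup.subset_closure ⟨b, hb1, hn, rfl⟩
      rcases Nat.eq_or_lt_of_le (show a ≤ b by omega) with rfl | hab
      · exact hgen
      · have hrec := ih a h1 (by omega) (by omega)
        have hkey : Equiv.swap b (b+1) * Equiv.swap a b * Equiv.swap b (b+1)
            = Equiv.swap a (b+1) := by
          rw [Equiv.swap_mul_swap_mul_swap (show a ≠ b by omega)
            (show a ≠ b + 1 by omega)]
          exact Equiv.swap_comm _ _
        rw [← hkey]
        exact Subgroup.mul_mem _ (Subgroup.mul_mem _ hgen hrec) hgen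
    · have : a = b + 1 := by omega
      subst this
      rw [Equiv.swap_self]
      exact Subgroup.one_mem _

lemma fixing_mem_closure {n : ℕ} : ∀ j, j ≤ n → ∀ σ : Equiv.Perm ℕ,
    (∀ m, m ∉ Finset.Icc 1 j → σ m = m) → σ ∈ Subgroup.closure (gens n) := by
  intro j
  induction j with
  | zero =>
    intro _ σ hfix
    have hσ : σ = 1 := Equiv.ext fun m => hfix m (by simp)
    rw [hσ]
    exact Subgroup.one_mem _
  | succ j ih =>
    intro hn σ hfix
    have hm : σ (j+1) ∈ Finset.Icc 1 (j+1) := by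
      by_contra h
      have h2 := hfix _ h
      have h3 : σ (j+1) = j + 1 := σ.injective h2
      rw [h3] at h
      simp [Finset.mem_Icc] at h
    by_cases hm1 : σ (j+1) = j + 1
    · apply ih (by omega) σ
      intro x hx
      by_cases hxj : x = j + 1
      · rw [hxj]; exact hm1
      · apply hfix
        simp only [Finset.mem_Icc] at hx ⊢
        omega
    · have hmIcc : 1 ≤ σ (j+1) ∧ σ (j+1) ≤ j + 1 := by
        simpa [Finset.mem_Icc] using hm
      have hτfix : ∀ x, x ∉ Finset.Icc 1 j →
          (Equiv.swap (σ (j+1)) (j+1) * σ) x = x := by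
        intro x hx
        by_cases hxj : x = j + 1
        · subst hxj
          simp only [Equiv.Perm.mul_apply]
          exact Equiv.swap_apply_left _ _
        · have hx' : x ∉ Finset.Icc 1 (j+1) := by
            simp only [Finset.mem_Icc] at hx ⊢
            omega
          have h1 := hfix x hx'
          simp only [Equiv.Perm.mul_apply, h1]
          apply Equiv.swap_apply_of_ne_of_ne
          · intro hcontra
            rw [hcontra] at h1
            exact hm1 (σ.injective h1)
          · exact hxj
      have hτmem := ih (by omega) _ hτfix
      have hσeq : σ = Equiv.swap (σ (j+1)) (j+1) * (Equiv.swap (σ (j+1)) (j+1) * σ) := by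
        rw [← mul_assoc, Equiv.swap_mul_self, one_mul]
      rw [hσeq]
      exact Subgroup.mul_mem _
        (swap_mem_closure (j+1) (σ (j+1)) hmIcc.1 hmIcc.2 hn) hτmem

end groupgen

section assembly

open MvPolynomial

lemma mem_skewCells {μ lam : YoungDiagram} {c : ℕ × ℕ} :
    c ∈ skewCells μ lam ↔ c ∈ lam ∧ c ∉ μ := by
  simp [skewCells, Finset.mem_sdiff, YoungDiagram.mem_cells]

lemma skew_P1 {μ lam : YoungDiagram} : ∀ ⦃r c c'⦄, c' < c →
    (r+1, c) ∈ skewCells μ lam → (r, c') ∈ skewCells μ lam →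
    (r+1, c') ∈ skewCells μ lam := by
  intro r c c' hlt h1 h2
  rw [mem_skewCells] at h1 h2 ⊢
  constructor
  · exact lam.up_left_mem (le_refl _) hlt.le h1.1
  · intro hmem
    exact h2.2 (μ.up_left_mem (by omega) (le_refl _) hmem)

lemma skew_P2 {μ lam : YoungDiagram} : ∀ ⦃r c c'⦄, c < c' →
    (r, c) ∈ skewCells μ lam → (r+1, c') ∈ skewCells μ lam →
    (r, c') ∈ skewCells μ lam := by
  intro r c c' hlt h1 h2
  rw [mem_skewCells] at h1 h2 ⊢
  constructor
  · exact lam.up_left_mem (by omega) (le_refl _) h2.1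
  · intro hmem
    exact h1.2 (μ.up_left_mem (le_refl _) hlt.le hmem)

lemma skew_P3 {μ lam : YoungDiagram} : ∀ ⦃i i' i'' j⦄, i ≤ i'' → i'' ≤ i' →
    (i, j) ∈ skewCells μ lam → (i', j) ∈ skewCells μ lam →
    (i'', j) ∈ skewCells μ lam := by
  intro i i' i'' j h1 h2 hm hm'
  rw [mem_skewCells] at hm hm' ⊢
  constructor
  · exact lam.up_left_mem h2 (le_refl _) hm'.1
  · intro hmem
    exact hm.2 (μ.up_left_mem h1 (le_refl _) hmem)

lemma finite_T (μ lam : YoungDiagram) (n : ℕ) :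
    {g : ℕ × ℕ → ℕ |
      (IsSSYTOn g (skewCells μ lam) ∧ ∀ c ∉ skewCells μ lam, g c = 0) ∧
      ∀ c ∈ skewCells μ lam, g c ≤ n}.Finite := by
  apply Set.Finite.of_finite_image
    (f := fun g : ℕ × ℕ → ℕ => fun c : {x // x ∈ skewCells μ lam} =>
      (⟨min (g c.1) n, by omega⟩ : Fin (n+1)))
  · exact Set.toFinite _
  · intro g1 h1 g2 h2 heq
    funext c
    by_cases hc : c ∈ skewCells μ lam
    · have := congrFun heq ⟨c, hc⟩
      simp only [Fin.mk.injEq] at this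
      have b1 := h1.2 c hc
      have b2 := h2.2 c hc
      omega
    · rw [h1.1.2 c hc, h2.1.2 c hc]

end assembly

section main

open MvPolynomial

lemma bk_mem_T {μ lam : YoungDiagram} {n k : ℕ} (hk1 : 1 ≤ k) (hkn : k + 1 ≤ n)
    {g : ℕ × ℕ → ℕ}
    (hssyt : IsSSYTOn g (skewCells μ lam)) (hzero : ∀ c ∉ skewCells μ lam, g c = 0)
    (hbound : ∀ c ∈ skewCells μ lam, g c ≤ n) :
    (IsSSYTOn (bk (skewCells μ lam) g k) (skewCells μ lam) ∧
      ∀ c ∉ skewCells μ lam, bk (skewCells μ lam) g k c = 0) ∧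
    ∀ c ∈ skewCells μ lam, bk (skewCells μ lam) g k c ≤ n := by
  refine ⟨⟨bk_isSSYT skew_P1 skew_P2 skew_P3 hssyt hk1, ?_⟩, ?_⟩
  · intro c hc
    rw [bk_of_not_free (fun hf => hc hf.1)]
    exact hzero c hc
  · intro c hc
    by_cases hf : Free (skewCells μ lam) g k c
    · rcases bk_val_of_free hf with h | h <;> omega
    · rw [bk_of_not_free hf]
      exact hbound c hc

lemma rename_swap_eq {μ lam : YoungDiagram} {n k : ℕ} (hk1 : 1 ≤ k) (hkn : k + 1 ≤ n) :
    MvPolynomial.rename ⇑(Equiv.swap k (k+1))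
        (∑ g ∈ (finite_T μ lam n).toFinset, ∏ c ∈ skewCells μ lam,
          (MvPolynomial.X (g c) : MvPolynomial ℕ ℤ))
      = ∑ g ∈ (finite_T μ lam n).toFinset, ∏ c ∈ skewCells μ lam,
          MvPolynomial.X (g c) := by
  rw [map_sum]
  have hterm : ∀ g ∈ (finite_T μ lam n).toFinset,
      (MvPolynomial.rename ⇑(Equiv.swap k (k+1)))
          (∏ c ∈ skewCells μ lam, (MvPolynomial.X (g c) : MvPolynomial ℕ ℤ))
        = ∏ c ∈ skewCells μ lam, MvPolynomial.X (bk (skewCells μ lam) g k c) := by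
    intro g _
    calc (MvPolynomial.rename ⇑(Equiv.swap k (k+1)))
          (∏ c ∈ skewCells μ lam, (MvPolynomial.X (g c) : MvPolynomial ℕ ℤ))
        = ∏ c ∈ skewCells μ lam,
            (MvPolynomial.X (Equiv.swap k (k+1) (g c)) : MvPolynomial ℕ ℤ) := by
          rw [map_prod]
          exact Finset.prod_congr rfl fun c _ => rename_X _ _
      _ = _ := prod_bk_eq_prod_swap.symm
  rw [Finset.sum_congr rfl hterm]
  refine Finset.sum_bij' (fun g _ => bk (skewCells μ lam) g k)
    (fun g _ => bk (skewCells μ lam) g k) ?_ ?_ ?_ ?_ ?_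
  · intro g hg
    rw [Set.Finite.mem_toFinset] at hg ⊢
    exact bk_mem_T hk1 hkn hg.1.1 hg.1.2 hg.2
  · intro g hg
    rw [Set.Finite.mem_toFinset] at hg ⊢
    exact bk_mem_T hk1 hkn hg.1.1 hg.1.2 hg.2
  · intro g hg
    rw [Set.Finite.mem_toFinset] at hg
    exact bk_bk hg.1.1
  · intro g hg
    rw [Set.Finite.mem_toFinset] at hg
    exact bk_bk hg.1.1
  · intro g hg
    rfl

end main

end BKproof

/-- The skew Schur polynomial `s_{λ/μ}(x₁, …, xₙ) = ∑_{T ∈ SSYT(λ/μ, n)} x^T` is a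
symmetric polynomial in `x₁, …, xₙ`: it is invariant under every permutation of the
variables `x₁, …, xₙ` (i.e. under renaming by any permutation of `ℕ` fixing all indices
outside `{1, …, n}`); moreover the set `SSYT(λ/μ, n)` is finite, so the sum makes sense. -/
theorem skew_schur_symmetric (μ lam : YoungDiagram) (hsub : μ ≤ lam) (n : ℕ) (hn : 1 ≤ n) :
    ∃ hfin : {g : ℕ × ℕ → ℕ |
        (IsSSYTOn g (skewCells μ lam) ∧ ∀ c ∉ skewCells μ lam, g c = 0) ∧
        ∀ c ∈ skewCells μ lam, g c ≤ n}.Finite,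
      ∀ σ : Equiv.Perm ℕ, (∀ m, m ∉ Finset.Icc 1 n → σ m = m) →
        MvPolynomial.rename (⇑σ)
            (∑ g ∈ hfin.toFinset, ∏ c ∈ skewCells μ lam,
              (MvPolynomial.X (g c) : MvPolynomial ℕ ℤ)) =
          ∑ g ∈ hfin.toFinset, ∏ c ∈ skewCells μ lam, MvPolynomial.X (g c) := by
  refine ⟨BKproof.finite_T μ lam n, ?_⟩
  intro σ hσ
  have hmem : σ ∈ Subgroup.closure (BKproof.gens n) :=
    BKproof.fixing_mem_closure n (le_refl n) σ hσ
  clear hσ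
  induction hmem using Subgroup.closure_induction with
  | mem x hx =>
    obtain ⟨k, hk1, hkn, rfl⟩ := hx
    exact BKproof.rename_swap_eq hk1 hkn
  | one =>
    rw [show ⇑(1 : Equiv.Perm ℕ) = id from rfl, MvPolynomial.rename_id, AlgHom.id_apply]
  | mul x y hx hy ihx ihy =>
    rw [show ⇑(x * y) = ⇑x ∘ ⇑y from rfl, ← MvPolynomial.rename_rename, ihy, ihx]
  | inv x hx ihx =>
    have h2 := congrArg (MvPolynomial.rename ⇑x⁻¹) ihx
    rw [MvPolynomial.rename_rename,
      show (⇑x⁻¹ ∘ ⇑x) = id from funext fun m => x.symm_apply_apply m,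
      MvPolynomial.rename_id] at h2
    exact h2.symm
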